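/- Suppose U₀ and U₁ are utility functions satisfying the single-period inverse investment problem, and suppose in addition that for every x > 0 the supremum is attained at some π*(x) with −x/(u−1) < π*(x) < x/(1−d), where the map x ↦ π*(x) is differentiable on (0,∞). Then the inverse marginals I₀ = (U₀′)^{−1} and I₁ = (U₁′)^{−1} satisfy the functional equation I₁(a·y) + b·I₁(y) = (1+b)·I₀(c·y) for all y > 0. -/

import Mathlib

open Set Filter

noncomputable section

/-- A utility function: `C²` on `(0,∞)`, strictly increasing and strictly concave there,
satisfying the Inada conditions. -/
def IsUtility (U : ℝ → ℝ) : Prop :=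
  ContDiffOn ℝ 2 U (Set.Ioi 0) ∧
  (∀ x > 0, 0 < deriv U x) ∧
  (∀ x > 0, deriv (deriv U) x < 0) ∧
  Tendsto (deriv U) (nhdsWithin 0 (Set.Ioi 0)) atTop ∧
  Tendsto (deriv U) atTop (nhds 0)

/-- An inverse marginal function: positive, `C¹` on `(0,∞)`, strictly decreasing derivative,
with `I(∞)=0` and `I(0+)=∞`. -/
def IsInvMarginal (I : ℝ → ℝ) : Prop :=
  (∀ y > 0, 0 < I y) ∧
  ContDiffOn ℝ 1 I (Set.Ioi 0) ∧
  (∀ y > 0, deriv I y < 0) ∧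
  Tendsto I atTop (nhds 0) ∧
  Tendsto I (nhdsWithin 0 (Set.Ioi 0)) atTop

/-- `I` is the inverse of the marginal `U'` on the positive reals: `I = (U')⁻¹`. -/
def InvMarginalOf (I U : ℝ → ℝ) : Prop :=
  (∀ x > 0, I (deriv U x) = x) ∧ (∀ y > 0, 0 < I y ∧ deriv U (I y) = y)

/-- `J` is the inverse function of `I` on the positive reals. -/
def IsInverseOf (J I : ℝ → ℝ) : Prop :=
  (∀ y > 0, J (I y) = y) ∧ (∀ x > 0, 0 < J x ∧ I (J x) = x)

/-- The single-period inverse investment problem: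
`U₀(x) = sup {p·U₁(x+π(u−1)) + (1−p)·U₁(x+π(d−1)) : −x/(u−1) ≤ π ≤ x/(1−d)}` for all `x > 0`. -/
def SPIIP (u d p : ℝ) (U₀ U₁ : ℝ → ℝ) : Prop :=
  ∀ x > 0, U₀ x =
    sSup ((fun pi => p * U₁ (x + pi * (u - 1)) + (1 - p) * U₁ (x + pi * (d - 1))) ''
      Set.Icc (-(x / (u - 1))) (x / (1 - d)))

/-- If utility functions `U₀, U₁` satisfy the single-period inverse investment
problem, with the supremum attained at an interior, differentiable optimizer `πs`, then the
inverse marginals satisfy `I₁(a·y) + b·I₁(y) = (1+b)·I₀(c·y)` for all `y > 0`. -/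
theorem stmt0
    (u d p q a b c : ℝ)
    (hu : 1 < u) (hd0 : 0 < d) (hd1 : d < 1) (hp0 : 0 < p) (hp1 : p < 1)
    (hq : q = (1 - d) / (u - d)) (ha : a = ((1 - p) * q) / (p * (1 - q)))
    (hb : b = (1 - q) / q) (hc : c = (1 - p) / (1 - q))
    (U₀ U₁ I₀ I₁ : ℝ → ℝ)
    (hU₀ : IsUtility U₀) (hU₁ : IsUtility U₁)
    (hI₀ : InvMarginalOf I₀ U₀) (hI₁ : InvMarginalOf I₁ U₁)
    (hSP : SPIIP u d p U₀ U₁)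
    (πs : ℝ → ℝ)
    (hπdiff : DifferentiableOn ℝ πs (Set.Ioi 0))
    (hπint : ∀ x > 0, -(x / (u - 1)) < πs x ∧ πs x < x / (1 - d))
    (hπatt : ∀ x > 0,
      U₀ x = p * U₁ (x + πs x * (u - 1)) + (1 - p) * U₁ (x + πs x * (d - 1))) :
    ∀ y > 0, I₁ (a * y) + b * I₁ y = (1 + b) * I₀ (c * y) := by

  -- basic positivity facts
  have hu1 : (0:ℝ) < u - 1 := by linarith
  have hd1' : (0:ℝ) < 1 - d := by linarith
  have hud : (0:ℝ) < u - d := by linarith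
  have hp1' : (0:ℝ) < 1 - p := by linarith
  have hq' : 1 - q = (u - 1) / (u - d) := by
    rw [hq]; field_simp; ring
  have ha' : a = (1 - p) * (1 - d) / (p * (u - 1)) := by
    rw [ha, hq', hq]
    rw [div_eq_div_iff (by positivity) (by positivity)]
    field_simp
    try ring
  have hb' : b = (u - 1) / (1 - d) := by
    rw [hb, hq', hq]
    rw [div_eq_div_iff (by positivity) (by positivity)]
    field_simp
  have hc' : c = (1 - p) * (u - d) / (u - 1) := by
    rw [hc, hq']
    rw [div_eq_div_iff (by positivity) (by positivity)]
    field_simp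
    try ring
  have hc0 : 0 < c := by rw [hc']; positivity
  -- monotonicity of U₁ on (0,∞)
  have hU₁d : DifferentiableOn ℝ U₁ (Set.Ioi 0) := hU₁.1.differentiableOn two_ne_zero
  have hmono : StrictMonoOn U₁ (Set.Ioi 0) :=
    strictMonoOn_of_deriv_pos (convex_Ioi 0) hU₁.1.continuousOn
      (by intro z hz; rw [interior_Ioi] at hz; exact hU₁.2.1 z hz)
  -- the key pointwise result
  have key : ∀ x, 0 < x → ∃ B, 0 < B ∧ deriv U₀ x = c * B ∧
      I₁ (a * B) + b * I₁ B = (1 + b) * x := by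
    intro x hx
    set f : ℝ → ℝ := fun pi => p * U₁ (x + pi * (u - 1)) + (1 - p) * U₁ (x + pi * (d - 1))
      with hf_def
    set l : ℝ := -(x / (u - 1)) with hl_def
    set r : ℝ := x / (1 - d) with hr_def
    have hlπ : l < πs x := (hπint x hx).1
    have hπr : πs x < r := (hπint x hx).2
    have hlmul : l * (u - 1) = -x := by rw [hl_def]; field_simp
    have hrmul : r * (1 - d) = x := by rw [hr_def]; field_simp
    set xu : ℝ := x + πs x * (u - 1) with hxu_def
    set xd : ℝ := x + πs x * (d - 1) with hxd_def
    have hxu : 0 < xu := by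
      have := mul_lt_mul_of_pos_right hlπ hu1
      rw [hlmul] at this; rw [hxu_def]; linarith
    have hxd : 0 < xd := by
      have := mul_lt_mul_of_pos_right hπr hd1'
      rw [hrmul] at this
      have h2 : πs x * (d - 1) = -(πs x * (1 - d)) := by ring
      rw [hxd_def, h2]; linarith
    set Mu : ℝ := x + r * (u - 1) with hMu_def
    set Md : ℝ := x + l * (d - 1) with hMd_def
    have hr0 : 0 < r := by rw [hr_def]; positivity
    have hl0 : l < 0 := by
      rw [hl_def]
      have : 0 < x / (u - 1) := by positivity
      linarith
    have hMu : 0 < Mu := by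
      have := mul_pos hr0 hu1
      rw [hMu_def]; linarith
    have hMd : 0 < Md := by
      have := mul_pos_of_neg_of_neg hl0 (by linarith : d - 1 < 0)
      rw [hMd_def]; linarith
    -- bounds on arguments for interior pi
    have harg : ∀ z, l < z → z < r →
        0 < x + z * (u - 1) ∧ x + z * (u - 1) ≤ Mu ∧
        0 < x + z * (d - 1) ∧ x + z * (d - 1) ≤ Md := by
      intro z h1 h2
      have e1 := mul_lt_mul_of_pos_right h1 hu1
      rw [hlmul] at e1
      have e2 := mul_lt_mul_of_pos_right h2 hu1
      have e3 := mul_lt_mul_of_pos_right h2 hd1'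
      rw [hrmul] at e3
      have e4 := mul_lt_mul_of_pos_right h1 hd1'
      have id1 : z * (d - 1) = -(z * (1 - d)) := by ring
      have id2 : l * (d - 1) = -(l * (1 - d)) := by ring
      refine ⟨by linarith, by rw [hMu_def]; linarith, by linarith, by rw [hMd_def]; linarith⟩
    have hbdd : BddAbove (f '' Set.Icc l r) := by
      refine ⟨max (f l) (max (f r) (p * U₁ Mu + (1 - p) * U₁ Md)), ?_⟩
      rintro _ ⟨z, hz, rfl⟩
      rcases eq_or_lt_of_le hz.1 with h1 | h1
      · rw [← h1]; exact le_max_left _ _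
      rcases eq_or_lt_of_le hz.2 with h2 | h2
      · rw [h2]; exact le_trans (le_max_left _ _) (le_max_right _ _)
      obtain ⟨e1, e2, e3, e4⟩ := harg z h1 h2
      have m1 : U₁ (x + z * (u - 1)) ≤ U₁ Mu :=
        hmono.monotoneOn e1 hMu e2
      have m2 : U₁ (x + z * (d - 1)) ≤ U₁ Md :=
        hmono.monotoneOn e3 hMd e4
      have : f z ≤ p * U₁ Mu + (1 - p) * U₁ Md := by
        rw [hf_def]; dsimp only
        have := mul_le_mul_of_nonneg_left m1 hp0.le
        have := mul_le_mul_of_nonneg_left m2 hp1'.le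
        linarith
      exact le_trans this (le_trans (le_max_right _ _) (le_max_right _ _))
    have hsup : sSup (f '' Set.Icc l r) = f (πs x) :=
      (hSP x hx).symm.trans (hπatt x hx)
    have hmax : IsLocalMax f (πs x) := by
      filter_upwards [Ioo_mem_nhds hlπ hπr] with z hz
      calc f z ≤ sSup (f '' Set.Icc l r) :=
            le_csSup hbdd ⟨z, Set.Ioo_subset_Icc_self hz, rfl⟩
        _ = f (πs x) := hsup
    -- derivative of f at πs x
    have hdu : DifferentiableAt ℝ U₁ xu := hU₁d.differentiableAt (Ioi_mem_nhds hxu)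
    have hdd : DifferentiableAt ℝ U₁ xd := hU₁d.differentiableAt (Ioi_mem_nhds hxd)
    have hg1 : HasDerivAt (fun z : ℝ => x + z * (u - 1)) (u - 1) (πs x) := by
      simpa using ((hasDerivAt_id (πs x)).mul_const (u - 1)).const_add x
    have hg2 : HasDerivAt (fun z : ℝ => x + z * (d - 1)) (d - 1) (πs x) := by
      simpa using ((hasDerivAt_id (πs x)).mul_const (d - 1)).const_add x
    have hcu : HasDerivAt (fun z : ℝ => U₁ (x + z * (u - 1)))
        (deriv U₁ xu * (u - 1)) (πs x) := hdu.hasDerivAt.comp (πs x) hg1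
    have hcd : HasDerivAt (fun z : ℝ => U₁ (x + z * (d - 1)))
        (deriv U₁ xd * (d - 1)) (πs x) := hdd.hasDerivAt.comp (πs x) hg2
    have hf : HasDerivAt f
        (p * (deriv U₁ xu * (u - 1)) + (1 - p) * (deriv U₁ xd * (d - 1))) (πs x) :=
      (hcu.const_mul p).add (hcd.const_mul (1 - p))
    have hFOC : p * (deriv U₁ xu * (u - 1)) + (1 - p) * (deriv U₁ xd * (d - 1)) = 0 := by
      rw [← hf.deriv]; exact hmax.deriv_eq_zero
    -- envelope: derivative of U₀ at x
    have hπs : HasDerivAt πs (deriv πs x) x :=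
      (hπdiff.differentiableAt (Ioi_mem_nhds hx)).hasDerivAt
    have hgu : HasDerivAt (fun z : ℝ => z + πs z * (u - 1))
        (1 + deriv πs x * (u - 1)) x := (hasDerivAt_id x).add (hπs.mul_const (u - 1))
    have hgd : HasDerivAt (fun z : ℝ => z + πs z * (d - 1))
        (1 + deriv πs x * (d - 1)) x := (hasDerivAt_id x).add (hπs.mul_const (d - 1))
    have hHu : HasDerivAt (fun z : ℝ => U₁ (z + πs z * (u - 1)))
        (deriv U₁ xu * (1 + deriv πs x * (u - 1))) x := hdu.hasDerivAt.comp x hgu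
    have hHd : HasDerivAt (fun z : ℝ => U₁ (z + πs z * (d - 1)))
        (deriv U₁ xd * (1 + deriv πs x * (d - 1))) x := hdd.hasDerivAt.comp x hgd
    have hH : HasDerivAt (fun z : ℝ =>
        p * U₁ (z + πs z * (u - 1)) + (1 - p) * U₁ (z + πs z * (d - 1)))
        (p * (deriv U₁ xu * (1 + deriv πs x * (u - 1))) +
         (1 - p) * (deriv U₁ xd * (1 + deriv πs x * (d - 1)))) x :=
      (hHu.const_mul p).add (hHd.const_mul (1 - p))
    have heqv : U₀ =ᶠ[nhds x] (fun z : ℝ =>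
        p * U₁ (z + πs z * (u - 1)) + (1 - p) * U₁ (z + πs z * (d - 1))) := by
      filter_upwards [Ioi_mem_nhds hx] with z hz using hπatt z hz
    have hEnv0 : deriv U₀ x =
        p * (deriv U₁ xu * (1 + deriv πs x * (u - 1))) +
        (1 - p) * (deriv U₁ xd * (1 + deriv πs x * (d - 1))) :=
      heqv.deriv_eq.trans hH.deriv
    have hEnv : deriv U₀ x = p * deriv U₁ xu + (1 - p) * deriv U₁ xd := by
      rw [hEnv0]; linear_combination (deriv πs x) * hFOC
    -- FOC relation: U₁'(xu) = a * U₁'(xd)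
    have haB : deriv U₁ xu = a * deriv U₁ xd := by
      rw [ha']
      rw [div_mul_eq_mul_div, eq_div_iff (by positivity)]
      linear_combination hFOC
    have hB : 0 < deriv U₁ xd := hU₁.2.1 xd hxd
    refine ⟨deriv U₁ xd, hB, ?_, ?_⟩
    · rw [hEnv, haB, hc', ha']
      field_simp
      ring
    · have e1 : I₁ (a * deriv U₁ xd) = xu := by
        rw [← haB]; exact hI₁.1 xu hxu
      have e2 : I₁ (deriv U₁ xd) = xd := hI₁.1 xd hxd
      rw [e1, e2, hxu_def, hxd_def, hb']
      field_simp
      ring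
  -- surjectivity of deriv U₀ via Inada conditions and IVT
  intro y hy
  set t : ℝ := c * y with ht_def
  have ht0 : 0 < t := mul_pos hc0 hy
  obtain ⟨x₁, ht1, hx₁⟩ :=
    ((hU₀.2.2.2.1.eventually (eventually_gt_atTop t)).and self_mem_nhdsWithin).exists
  obtain ⟨x₂, ht2, hx₂⟩ :=
    ((hU₀.2.2.2.2.eventually (Iio_mem_nhds ht0)).and (eventually_ge_atTop x₁)).exists
  have hx₁0 : 0 < x₁ := hx₁
  have hcont : ContinuousOn (deriv U₀) (Set.Icc x₁ x₂) :=
    (hU₀.1.continuousOn_deriv_of_isOpen isOpen_Ioi one_le_two).mono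
      (fun z hz => lt_of_lt_of_le hx₁0 hz.1)
  have hmem : t ∈ Set.Icc (deriv U₀ x₂) (deriv U₀ x₁) := ⟨ht2.le, ht1.le⟩
  obtain ⟨x, hxmem, hfx⟩ := intermediate_value_Icc' hx₂ hcont hmem
  have hx0 : 0 < x := lt_of_lt_of_le hx₁0 hxmem.1
  obtain ⟨B, hB0, hcB, hkey⟩ := key x hx0
  have hBy : B = y := by
    have : c * B = c * y := by rw [← hcB, hfx]
    exact mul_left_cancel₀ hc0.ne' this
  have hI0x : I₀ (c * y) = x := by
    have := hI₀.1 x hx0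
    rw [hfx] at this; exact this
  rw [hBy] at hkey
  rw [hkey, hI0x]
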